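/- If P ⊆ {0,1}^r is balanced (i.e., closed under alternating sums of odd length that land in {0,1}^r), and there exist integers z_t for t ∈ P with Σ z_t = 1 and t' = Σ_{t ∈ P} z_t · t ∈ {0,1}^r (sum in Z^r), then t' ∈ P. -/

import Mathlib

/-- The 0/1 integer vector associated to a Boolean tuple. -/
def toInt {r : ℕ} (t : Fin r → Bool) : Fin r → ℤ := fun i => if t i then 1 else 0

/-- A Boolean predicate `P ⊆ {0,1}^r` is balanced if every alternating sum of an odd
number of tuples of `P` that lands in `{0,1}^r` lies in `P`. -/
def IsBalancedPred {r : ℕ} (P : Set (Fin r → Bool)) : Prop :=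
  ∀ m : ℕ, Odd m → ∀ t : Fin m → (Fin r → Bool), (∀ i, t i ∈ P) →
    ∀ s : Fin r → Bool,
      toInt s = ∑ i : Fin m, ((-1 : ℤ) ^ (i : ℕ)) • toInt (t i) → s ∈ P


lemma alt_sum_split (g : ℕ → ℤ) (n : ℕ) :
    ∑ i ∈ Finset.range (2 * n + 1), (-1 : ℤ) ^ i * g i =
      (∑ k ∈ Finset.range (n + 1), g (2 * k)) - ∑ k ∈ Finset.range n, g (2 * k + 1) := by
  induction n with
  | zero => simp
  | succ n ih =>
    have h1 : 2 * (n + 1) + 1 = (2 * n + 1) + 1 + 1 := by ring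
    have e1 : (-1 : ℤ) ^ (2 * n + 1) = -1 := by
      rw [pow_succ]; simp [pow_mul]
    have e2 : (-1 : ℤ) ^ (2 * n + 1 + 1) = 1 := by
      rw [pow_succ, e1]; ring
    rw [h1, Finset.sum_range_succ, Finset.sum_range_succ, ih, e1, e2,
      Finset.sum_range_succ (fun k => g (2 * k)) (n + 1),
      Finset.sum_range_succ (fun k => g (2 * k + 1)) n]
    have h3 : 2 * (n + 1) = 2 * n + 1 + 1 := by ring
    rw [h3]
    ring

lemma sum_getD (l : List ℤ) (d : ℤ) :
    ∑ k ∈ Finset.range l.length, l.getD k d = l.sum := by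
  induction l with
  | nil => simp
  | cons a l ih =>
    rw [List.length_cons, Finset.sum_range_succ']
    simp only [List.getD_cons_succ, List.getD_cons_zero, List.sum_cons, ih]
    ring

lemma flat_map_sum {α M : Type*} [AddCommMonoid M] (l : List α) (k : α → ℕ) (g : α → M) :
    ((l.flatMap fun t => List.replicate (k t) t).map g).sum = (l.map fun t => k t • g t).sum := by
  induction l with
  | nil => simp
  | cons a l ih => simp [List.flatMap_cons, ih, List.map_replicate]

lemma flat_map_len {α : Type*} (l : List α) (k : α → ℕ) :
    (l.flatMap fun t => List.replicate (k t) t).length = (l.map k).sum := by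
  simp [List.length_flatMap, Function.comp_def]

/-- If `P` is balanced and `t' = Σ_{t ∈ P} z_t · t` is a 0/1 vector where the integer
coefficients satisfy `Σ z_t = 1`, then `t' ∈ P`. -/
theorem balanced_affine_combination {r : ℕ} (P : Finset (Fin r → Bool))
    (hP : IsBalancedPred (↑P : Set (Fin r → Bool)))
    (z : (Fin r → Bool) → ℤ) (hz : ∑ t ∈ P, z t = 1)
    (t' : Fin r → Bool) (ht' : toInt t' = ∑ t ∈ P, z t • toInt t) :
    t' ∈ P := by
  classical
  set pos : (Fin r → Bool) → ℕ := fun t => (z t).toNat with hpos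
  set neg : (Fin r → Bool) → ℕ := fun t => (-(z t)).toNat with hneg
  set A : List (Fin r → Bool) := P.toList.flatMap fun t => List.replicate (pos t) t with hA
  set B : List (Fin r → Bool) := P.toList.flatMap fun t => List.replicate (neg t) t with hB
  -- lengths
  have hAlen : A.length = ∑ t ∈ P, pos t := by
    rw [hA, flat_map_len, Finset.sum_map_toList]
  have hBlen : B.length = ∑ t ∈ P, neg t := by
    rw [hB, flat_map_len, Finset.sum_map_toList]
  have hzsplit : ∀ t, (pos t : ℤ) - (neg t : ℤ) = z t := fun t => Int.toNat_sub_toNat_neg (z t)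
  have hlen : A.length = B.length + 1 := by
    have h1 : (∑ t ∈ P, (pos t : ℤ)) - (∑ t ∈ P, (neg t : ℤ)) = 1 := by
      rw [← Finset.sum_sub_distrib]
      simp only [hzsplit]; exact hz
    have h2 : ((∑ t ∈ P, pos t : ℕ) : ℤ) - ((∑ t ∈ P, neg t : ℕ) : ℤ) = 1 := by
      push_cast; exact h1
    omega
  set n := B.length with hn
  -- members
  have hAmem : ∀ x ∈ A, x ∈ P := by
    intro x hx
    rw [hA, List.mem_flatMap] at hx
    obtain ⟨a, ha, hxa⟩ := hx
    rw [List.eq_of_mem_replicate hxa]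
    exact Finset.mem_toList.mp ha
  have hBmem : ∀ x ∈ B, x ∈ P := by
    intro x hx
    rw [hB, List.mem_flatMap] at hx
    obtain ⟨a, ha, hxa⟩ := hx
    rw [List.eq_of_mem_replicate hxa]
    exact Finset.mem_toList.mp ha
  -- the tuple
  set f : ℕ → (Fin r → Bool) := fun i =>
    if i % 2 = 0 then A.getD (i / 2) t' else B.getD (i / 2) t' with hf
  have hfmem : ∀ i < 2 * n + 1, f i ∈ P := by
    intro i hi
    rw [hf]
    by_cases h : i % 2 = 0
    · simp only [h, if_true]
      have hlt : i / 2 < A.length := by omega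
      rw [List.getD_eq_getElem A t' hlt]
      exact hAmem _ (List.getElem_mem hlt)
    · simp only [h, if_false]
      have hlt : i / 2 < B.length := by omega
      rw [List.getD_eq_getElem B t' hlt]
      exact hBmem _ (List.getElem_mem hlt)
  apply hP (2 * n + 1) ⟨n, by ring⟩ (fun i => f i.val) (fun i => hfmem i.val i.isLt) t'
  -- the sum identity
  funext j
  have key : ∑ i : Fin (2 * n + 1), ((-1 : ℤ) ^ (i : ℕ)) • toInt (f i.val) j
      = (∑ t ∈ P, z t • toInt t) j := by
    have := Fin.sum_univ_eq_sum_range (fun i => ((-1 : ℤ) ^ i) • toInt (f i) j) (2 * n + 1)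
    rw [this]
    simp only [smul_eq_mul]
    rw [alt_sum_split (fun i => toInt (f i) j) n]
    have hev : ∀ k, f (2 * k) = A.getD k t' := by
      intro k; rw [hf]; simp [Nat.mul_div_cancel_left]
    have hod : ∀ k, f (2 * k + 1) = B.getD k t' := by
      intro k; rw [hf]
      have h1 : (2 * k + 1) % 2 = 1 := by omega
      have h2 : (2 * k + 1) / 2 = k := by omega
      simp [h1, h2]
    simp only [hev, hod]
    have hAj : ∑ k ∈ Finset.range (n + 1), toInt (A.getD k t') j
        = ((A.map fun t => toInt t j)).sum := by
      have hlen2 : (A.map fun t => toInt t j).length = n + 1 := by simp [hlen]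
      rw [← sum_getD (A.map fun t => toInt t j) (toInt t' j), hlen2]
      apply Finset.sum_congr rfl
      intro k hk
      rw [Finset.mem_range] at hk
      have hk' : k < A.length := by omega
      rw [List.getD_eq_getElem A t' hk',
        List.getD_eq_getElem _ _ (by simpa using hk'), List.getElem_map]
    have hBj : ∑ k ∈ Finset.range n, toInt (B.getD k t') j
        = ((B.map fun t => toInt t j)).sum := by
      have hlen2 : (B.map fun t => toInt t j).length = n := by simp [hn]
      rw [← sum_getD (B.map fun t => toInt t j) (toInt t' j), hlen2]
      apply Finset.sum_congr rfl
      intro k hk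
      rw [Finset.mem_range] at hk
      have hk' : k < B.length := by omega
      rw [List.getD_eq_getElem B t' hk',
        List.getD_eq_getElem _ _ (by simpa using hk'), List.getElem_map]
    rw [hAj, hBj, hA, hB, flat_map_sum, flat_map_sum, Finset.sum_map_toList, Finset.sum_map_toList]
    rw [← Finset.sum_sub_distrib]
    rw [Finset.sum_apply]
    apply Finset.sum_congr rfl
    intro t _
    have : (pos t : ℤ) • toInt t j - (neg t : ℤ) • toInt t j = z t • toInt t j := by
      rw [← sub_smul, hzsplit]
    simpa using this
  rw [ht']
  rw [Finset.sum_apply] at key ⊢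
  rw [← key]
  rw [Fin.sum_univ_eq_sum_range (fun i => ((-1:ℤ)^i) • toInt (f i)) (2*n+1),
    Fin.sum_univ_eq_sum_range (fun i => ((-1:ℤ)^i) • toInt (f i) j) (2*n+1)]
  rw [Finset.sum_apply]
  simp
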